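/- Assume each Markov kernel M_j is reversible with respect to Π_j and ‖Π_{j-1}/Π_j‖_∞ < ∞. Then the spectral gap λ_j of the operator Q_j satisfies λ_j ≤ 1 + α_j, where α_j is the discrepancy coefficient between Π_{j-1} and Π_j. -/

import Mathlib

open MeasureTheory ProbabilityTheory
open scoped ENNReal NNReal

/-- Reversibility of a kernel `M` with respect to a measure `π` (detailed balance). -/
def IsReversible {Θ : Type*} [MeasurableSpace Θ] (M : Kernel Θ Θ) (π : Measure Θ) : Prop :=
  ∀ A B : Set Θ, MeasurableSet A → MeasurableSet B →
    ∫⁻ x in A, M x B ∂π = ∫⁻ x in B, M x A ∂π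

/-- The finite kernel `Q_j(x, ·) = ∫ M(x,dy) ∫_· M(y,dz) r(z)` where `r = Π_{j-1}/Π_j`. -/
noncomputable def Qmeas {Θ : Type*} [MeasurableSpace Θ] (M : Kernel Θ Θ) (r : Θ → ℝ)
    (x : Θ) : Measure Θ :=
  (M x).bind (fun y => (M y).withDensity (fun z => ENNReal.ofReal (r z)))

/-- `Var_π(f) = π(f²) − π(f)²`. -/
noncomputable def varI {Θ : Type*} [MeasurableSpace Θ] (π : Measure Θ) (f : Θ → ℝ) : ℝ :=
  (∫ x, (f x) ^ 2 ∂π) - (∫ x, f x ∂π) ^ 2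

/-- The discrepancy coefficient
`α_j = sup{ ∫ Π_{j-1}(dx) f²(x) ∫ M_j²(x,dz) |r(z) − 1| : f ∈ L²(Π_{j-1}), Π_{j-1}(f²) = 1 }`. -/
noncomputable def discrepancy {Θ : Type*} [MeasurableSpace Θ] (πprev : Measure Θ)
    (M : Kernel Θ Θ) (r : Θ → ℝ) : ℝ :=
  sSup {a : ℝ | ∃ f : Θ → ℝ, Measurable f ∧ Integrable (fun x => (f x) ^ 2) πprev ∧
    (∫ x, (f x) ^ 2 ∂πprev) = 1 ∧
    a = ∫ x, (f x) ^ 2 * (∫ z, |r z - 1| ∂((M x).bind (fun y => M y))) ∂πprev}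

/-- The spectral gap `λ_j = inf{ G_j(f) : f ∈ L²(Π_{j-1}), Var_{j-1}(f) > 0 }` of `Q_j`. -/
noncomputable def specGap {Θ : Type*} [MeasurableSpace Θ] (πprev : Measure Θ)
    (M : Kernel Θ Θ) (r : Θ → ℝ) : ℝ :=
  sInf {g : ℝ | ∃ f : Θ → ℝ, Measurable f ∧ Integrable (fun x => (f x) ^ 2) πprev ∧
    0 < varI πprev f ∧
    g = (∫ x, (∫ y, (f y - f x) ^ 2 ∂(Qmeas M r x)) ∂πprev) /
        (∫ x, (∫ y, (f y - f x) ^ 2 ∂πprev) ∂πprev)}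

theorem Measurable.mul_pt {α M : Type*} [MeasurableSpace α] [MeasurableSpace M] [Mul M]
    [MeasurableMul₂ M] {f g : α → M} (hf : Measurable f) (hg : Measurable g) :
    Measurable fun x => f x * g x :=
  hf.mul hg


lemma ennreal_amgm (a b : ℝ≥0∞) : 2 * (a * b) ≤ a * a + b * b := by
  rcases eq_or_ne a ⊤ with rfl | ha
  · rcases eq_or_ne b 0 with rfl | hb
    · simp
    · calc 2 * ((⊤:ℝ≥0∞) * b) ≤ ⊤ := le_top
        _ ≤ (⊤:ℝ≥0∞) * (⊤:ℝ≥0∞) + b * b := by simp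
  · rcases eq_or_ne b ⊤ with rfl | hb
    · rcases eq_or_ne a 0 with rfl | ha0
      · simp
      · calc 2 * (a * (⊤:ℝ≥0∞)) ≤ ⊤ := le_top
          _ ≤ a * a + (⊤:ℝ≥0∞) * (⊤:ℝ≥0∞) := by simp
    · lift a to ℝ≥0 using ha
      lift b to ℝ≥0 using hb
      rw [← ENNReal.coe_mul, ← ENNReal.coe_mul, ← ENNReal.coe_mul, ← ENNReal.coe_add,
        show ((2:ℝ≥0∞) = ((2:ℝ≥0) : ℝ≥0∞)) by norm_num, ← ENNReal.coe_mul, ENNReal.coe_le_coe,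
        ← NNReal.coe_le_coe]
      push_cast
      nlinarith [sq_nonneg ((a:ℝ) - b)]


lemma ofReal_ident (a b : ℝ) :
    ENNReal.ofReal ((b - a) ^ 2)
      + 2 * (ENNReal.ofReal (max a 0) * ENNReal.ofReal (max b 0)
        + ENNReal.ofReal (max (-a) 0) * ENNReal.ofReal (max (-b) 0))
    = ENNReal.ofReal (a ^ 2) + ENNReal.ofReal (b ^ 2)
      + 2 * (ENNReal.ofReal (max a 0) * ENNReal.ofReal (max (-b) 0)
        + ENNReal.ofReal (max (-a) 0) * ENNReal.ofReal (max b 0)) := by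
  have ha' : max a 0 - max (-a) 0 = a := by
    rcases le_total a 0 with h | h
    · rw [max_eq_right h, max_eq_left (neg_nonneg.2 h)]; ring
    · rw [max_eq_left h, max_eq_right (neg_nonpos.2 h)]; ring
  have hb' : max b 0 - max (-b) 0 = b := by
    rcases le_total b 0 with h | h
    · rw [max_eq_right h, max_eq_left (neg_nonneg.2 h)]; ring
    · rw [max_eq_left h, max_eq_right (neg_nonpos.2 h)]; ring
  have key : (b - a) ^ 2 + 2 * (max a 0 * max b 0 + max (-a) 0 * max (-b) 0)
      = a ^ 2 + b ^ 2 + 2 * (max a 0 * max (-b) 0 + max (-a) 0 * max b 0) := by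
    linear_combination (2 * (max b 0 - max (-b) 0)) * ha' + 2 * a * hb'
  have pa0 : (0:ℝ) ≤ max a 0 := le_max_right _ _
  have pb0 : (0:ℝ) ≤ max b 0 := le_max_right _ _
  have wa0 : (0:ℝ) ≤ max (-a) 0 := le_max_right _ _
  have wb0 : (0:ℝ) ≤ max (-b) 0 := le_max_right _ _
  have mulc : ∀ x y : ℝ, 0 ≤ x → ENNReal.ofReal x * ENNReal.ofReal y = ENNReal.ofReal (x * y) :=
    fun x y hx => (ENNReal.ofReal_mul hx).symm
  have comb : ∀ x y : ℝ, 0 ≤ x → 0 ≤ y →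
      ENNReal.ofReal x + ENNReal.ofReal y = ENNReal.ofReal (x + y) :=
    fun x y hx hy => (ENNReal.ofReal_add hx hy).symm
  have twoc : ∀ x : ℝ, 2 * ENNReal.ofReal x = ENNReal.ofReal (2 * x) := by
    intro x
    rw [show (2:ℝ≥0∞) = ENNReal.ofReal 2 from by norm_num,
      ← ENNReal.ofReal_mul (by norm_num : (0:ℝ) ≤ 2)]
  rw [mulc _ _ pa0, mulc _ _ wa0, mulc _ _ pa0, mulc _ _ wa0,
    comb _ _ (mul_nonneg pa0 pb0) (mul_nonneg wa0 wb0),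
    comb _ _ (mul_nonneg pa0 wb0) (mul_nonneg wa0 pb0),
    twoc, twoc,
    comb _ _ (sq_nonneg _) (by positivity),
    comb _ _ (sq_nonneg _) (sq_nonneg _),
    comb _ _ (by positivity) (by positivity),
    key]


lemma swap_lemma {Θ : Type*} [MeasurableSpace Θ] (πcur : Measure Θ)
    (hπcur : IsProbabilityMeasure πcur) (M : Kernel Θ Θ) (hM : IsMarkovKernel M)
    (hrev : IsReversible M πcur) (g₁ g₂ : Θ → ℝ≥0∞) (hg₁ : Measurable g₁) (hg₂ : Measurable g₂) :
    ∫⁻ x, g₁ x * ∫⁻ y, g₂ y ∂(M x) ∂πcur = ∫⁻ x, g₂ x * ∫⁻ y, g₁ y ∂(M x) ∂πcur := by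
  set μ := πcur ⊗ₘ M with hμdef
  have hμswap : μ.map Prod.swap = μ := by
    refine ext_of_generate_finite _ generateFrom_prod.symm isPiSystem_prod ?_ ?_
    · rintro _ ⟨s, hs, t, ht, rfl⟩
      simp only [Set.mem_setOf_eq] at hs ht
      rw [Measure.map_apply measurable_swap ((hs.prod ht))]
      rw [Set.preimage_swap_prod, Measure.compProd_apply_prod ht hs,
        Measure.compProd_apply_prod hs ht, hrev t s ht hs]
    · rw [Measure.map_apply measurable_swap MeasurableSet.univ]
      simp
  have hm12 : Measurable fun p : Θ × Θ => g₁ p.1 * g₂ p.2 := by fun_prop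
  have hm21 : Measurable fun p : Θ × Θ => g₂ p.1 * g₁ p.2 := by fun_prop
  have h1 : ∫⁻ x, g₁ x * ∫⁻ y, g₂ y ∂(M x) ∂πcur = ∫⁻ p, g₁ p.1 * g₂ p.2 ∂μ := by
    rw [hμdef, Measure.lintegral_compProd hm12]
    simp_rw [lintegral_const_mul _ hg₂]
  have h2 : ∫⁻ x, g₂ x * ∫⁻ y, g₁ y ∂(M x) ∂πcur = ∫⁻ p, g₂ p.1 * g₁ p.2 ∂μ := by
    rw [hμdef, Measure.lintegral_compProd hm21]
    simp_rw [lintegral_const_mul _ hg₁]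
  rw [h1, h2]
  conv_lhs => rw [← hμswap, lintegral_map hm12 measurable_swap]
  simp_rw [Prod.fst_swap, Prod.snd_swap, mul_comm]


lemma core_bound {Θ : Type*} [MeasurableSpace Θ] (πprev πcur : Measure Θ)
    (hπprev : IsProbabilityMeasure πprev) (hπcur : IsProbabilityMeasure πcur)
    (M : Kernel Θ Θ) (hM : IsMarkovKernel M) (hrev : IsReversible M πcur)
    (r : Θ → ℝ) (hrmeas : Measurable r) (hrnonneg : ∀ z, 0 ≤ r z)
    (hdens : πprev = πcur.withDensity (fun z => ENNReal.ofReal (r z)))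
    (ρ : ℝ) (hρ : ∀ z, r z ≤ ρ) (hρ0 : 0 ≤ ρ)
    (h : Θ → ℝ) (mh : Measurable h) (hint : Integrable (fun x => h x ^ 2) πprev)
    (hnorm : (∫ x, h x ^ 2 ∂πprev) = 1)
    (ah : ℝ) (hah : ah = ∫ x, h x ^ 2 * (∫ z, |r z - 1| ∂((M x).bind (fun y => M y))) ∂πprev) :
    (∫ x, (∫ y, (h y - h x) ^ 2 ∂(Qmeas M r x)) ∂πprev) ≤ 2 + 2 * ah := by
  -- notation
  set R : Θ → ℝ≥0∞ := fun z => ENNReal.ofReal (r z) with hRdef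
  have mR : Measurable R := hrmeas.ennreal_ofReal
  set K : Kernel Θ Θ := M ∘ₖ M with hKdef
  haveI hKmarkov : IsMarkovKernel K := by rw [hKdef]; infer_instance
  set U : Θ → ℝ≥0∞ := fun z => ENNReal.ofReal (max (h z) 0) with hUdef
  set W : Θ → ℝ≥0∞ := fun z => ENNReal.ofReal (max (-h z) 0) with hWdef
  set H : Θ → ℝ≥0∞ := fun z => ENNReal.ofReal (h z ^ 2) with hHdef
  have mU : Measurable U := (mh.max measurable_const).ennreal_ofReal
  have mW : Measurable W := (mh.neg.max measurable_const).ennreal_ofReal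
  have mH : Measurable H := (mh.pow_const 2).ennreal_ofReal
  -- measurability of inner kernel integrals
  have minnerM : ∀ g : Θ → ℝ≥0∞, Measurable g → Measurable fun x => ∫⁻ z, g z ∂(M x) :=
    fun g hg => Measurable.lintegral_kernel_prod_right
      (show Measurable (Function.uncurry fun _ z => g z) from hg.comp measurable_snd)
  have minnerK : ∀ g : Θ → ℝ≥0∞, Measurable g → Measurable fun x => ∫⁻ z, g z ∂(K x) :=
    fun g hg => Measurable.lintegral_kernel_prod_right
      (show Measurable (Function.uncurry fun _ z => g z) from hg.comp measurable_snd)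
  have mF : Measurable (Function.uncurry fun x z => R z * ENNReal.ofReal ((h z - h x) ^ 2)) := by
    apply Measurable.mul (mR.comp measurable_snd)
    exact (((mh.comp measurable_snd).sub (mh.comp measurable_fst)).pow_const 2).ennreal_ofReal
  have mIF : Measurable fun x => ∫⁻ z, R z * ENNReal.ofReal ((h z - h x) ^ 2) ∂(K x) :=
    Measurable.lintegral_kernel_prod_right mF
  have mIU : Measurable fun x => ∫⁻ z, R z * U z ∂(K x) := minnerK _ (mR.mul_pt mU)
  have mIW : Measurable fun x => ∫⁻ z, R z * W z ∂(K x) := minnerK _ (mR.mul_pt mW)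
  have mIH : Measurable fun x => ∫⁻ z, R z * H z ∂(K x) := minnerK _ (mR.mul_pt mH)
  have mIR : Measurable fun x => ∫⁻ z, R z ∂(K x) := minnerK _ mR
  -- lintegrals over Qmeas
  have hQl : ∀ (x : Θ) (g : Θ → ℝ≥0∞), Measurable g →
      ∫⁻ z, g z ∂(Qmeas M r x) = ∫⁻ z, R z * g z ∂(K x) := by
    intro x g hg
    have hwd : ∀ y, (M y).withDensity R = (Kernel.withDensity M fun _ z => R z) y := by
      intro y
      rw [Kernel.withDensity_apply]
      exact mR.comp measurable_snd
    have hmwd : Measurable fun y => (M y).withDensity R := by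
      simp_rw [hwd]
      exact (Kernel.withDensity M fun _ z => R z).measurable
    rw [show Qmeas M r x = (M x).bind (fun y => (M y).withDensity R) from rfl,
      Measure.lintegral_bind hmwd.aemeasurable hg.aemeasurable, hKdef, Kernel.lintegral_comp M M x (mR.mul_pt hg)]
    refine lintegral_congr fun y => ?_
    rw [lintegral_withDensity_eq_lintegral_mul _ mR hg]
    rfl
  -- the three-slot swap identity
  have hC : ∀ p q : Θ → ℝ≥0∞, Measurable p → Measurable q →
      ∫⁻ x, R x * (p x * ∫⁻ z, R z * q z ∂(K x)) ∂πcur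
        = ∫⁻ x, (∫⁻ y, R y * p y ∂(M x)) * (∫⁻ y, R y * q y ∂(M x)) ∂πcur := by
    intro p q hp hq
    have hGq : Measurable fun y => ∫⁻ z, R z * q z ∂(M y) := minnerM _ (mR.mul_pt hq)
    have h1 : ∀ x, ∫⁻ z, R z * q z ∂(K x) = ∫⁻ y, (∫⁻ z, R z * q z ∂(M y)) ∂(M x) := by
      intro x; rw [hKdef]; exact Kernel.lintegral_comp M M x (mR.mul_pt hq)
    simp_rw [h1]
    have h2 : ∀ x, R x * (p x * ∫⁻ y, (∫⁻ z, R z * q z ∂(M y)) ∂(M x))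
        = (fun x => R x * p x) x * ∫⁻ y, (fun y => ∫⁻ z, R z * q z ∂(M y)) y ∂(M x) := by
      intro x; simp [mul_assoc]
    rw [lintegral_congr h2, swap_lemma πcur hπcur M hM hrev _ _ (mR.mul_pt hp) hGq]
    exact lintegral_congr fun x => by rw [mul_comm]
  -- pointwise-in-x integrated identity over K x
  have hIDx : ∀ x : Θ,
      (∫⁻ z, R z * ENNReal.ofReal ((h z - h x) ^ 2) ∂(K x))
        + (2 * (U x * ∫⁻ z, R z * U z ∂(K x)) + 2 * (W x * ∫⁻ z, R z * W z ∂(K x)))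
      = H x * (∫⁻ z, R z ∂(K x)) + ((∫⁻ z, R z * H z ∂(K x))
        + (2 * (U x * ∫⁻ z, R z * W z ∂(K x)) + 2 * (W x * ∫⁻ z, R z * U z ∂(K x)))) := by
    intro x
    have mFx : Measurable fun z => R z * ENNReal.ofReal ((h z - h x) ^ 2) :=
      mR.mul_pt (((mh.sub measurable_const).pow_const 2).ennreal_ofReal)
    have eL : (∫⁻ z, R z * ENNReal.ofReal ((h z - h x) ^ 2) ∂(K x))
        + (2 * (U x * ∫⁻ z, R z * U z ∂(K x)) + 2 * (W x * ∫⁻ z, R z * W z ∂(K x)))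
        = ∫⁻ z, (R z * ENNReal.ofReal ((h z - h x) ^ 2)
            + ((2 * U x) * (R z * U z) + (2 * W x) * (R z * W z))) ∂(K x) := by
      rw [lintegral_add_left mFx, lintegral_add_left ((mR.mul_pt mU).const_mul _),
        lintegral_const_mul _ (mR.mul_pt mU), lintegral_const_mul _ (mR.mul_pt mW)]
      ring
    have eR : H x * (∫⁻ z, R z ∂(K x)) + ((∫⁻ z, R z * H z ∂(K x))
        + (2 * (U x * ∫⁻ z, R z * W z ∂(K x)) + 2 * (W x * ∫⁻ z, R z * U z ∂(K x))))
        = ∫⁻ z, (H x * R z + (R z * H z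
            + ((2 * U x) * (R z * W z) + (2 * W x) * (R z * U z)))) ∂(K x) := by
      rw [lintegral_add_left (mR.const_mul _), lintegral_add_left (mR.mul_pt mH),
        lintegral_add_left ((mR.mul_pt mW).const_mul _),
        lintegral_const_mul _ mR, lintegral_const_mul _ (mR.mul_pt mW),
        lintegral_const_mul _ (mR.mul_pt mU)]
      ring
    rw [eL, eR]
    refine lintegral_congr fun z => ?_
    have base := ofReal_ident (h x) (h z)
    calc R z * ENNReal.ofReal ((h z - h x) ^ 2)
          + ((2 * U x) * (R z * U z) + (2 * W x) * (R z * W z))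
        = (ENNReal.ofReal ((h z - h x) ^ 2)
            + 2 * (U x * U z + W x * W z)) * R z := by rw [hUdef, hWdef]; ring
      _ = (ENNReal.ofReal (h x ^ 2) + ENNReal.ofReal (h z ^ 2)
            + 2 * (U x * W z + W x * U z)) * R z := by rw [hUdef, hWdef]; rw [base]
      _ = H x * R z + (R z * H z
            + ((2 * U x) * (R z * W z) + (2 * W x) * (R z * U z))) := by
          rw [hUdef, hWdef, hHdef]; ring
  -- integrate the identity over πcur with weight R x
  have hEQ : (∫⁻ x, R x * (∫⁻ z, R z * ENNReal.ofReal ((h z - h x) ^ 2) ∂(K x)) ∂πcur)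
      + (2 * (∫⁻ x, R x * (U x * ∫⁻ z, R z * U z ∂(K x)) ∂πcur)
        + 2 * (∫⁻ x, R x * (W x * ∫⁻ z, R z * W z ∂(K x)) ∂πcur))
      = (∫⁻ x, R x * (H x * ∫⁻ z, R z ∂(K x)) ∂πcur)
      + ((∫⁻ x, R x * (∫⁻ z, R z * H z ∂(K x)) ∂πcur)
        + (2 * (∫⁻ x, R x * (U x * ∫⁻ z, R z * W z ∂(K x)) ∂πcur)
          + 2 * (∫⁻ x, R x * (W x * ∫⁻ z, R z * U z ∂(K x)) ∂πcur))) := by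
    have eL : (∫⁻ x, R x * (∫⁻ z, R z * ENNReal.ofReal ((h z - h x) ^ 2) ∂(K x)) ∂πcur)
        + (2 * (∫⁻ x, R x * (U x * ∫⁻ z, R z * U z ∂(K x)) ∂πcur)
          + 2 * (∫⁻ x, R x * (W x * ∫⁻ z, R z * W z ∂(K x)) ∂πcur))
        = ∫⁻ x, R x * ((∫⁻ z, R z * ENNReal.ofReal ((h z - h x) ^ 2) ∂(K x))
            + (2 * (U x * ∫⁻ z, R z * U z ∂(K x)) + 2 * (W x * ∫⁻ z, R z * W z ∂(K x)))) ∂πcur := by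
      have e1 : ∀ x : Θ, R x * ((∫⁻ z, R z * ENNReal.ofReal ((h z - h x) ^ 2) ∂(K x))
            + (2 * (U x * ∫⁻ z, R z * U z ∂(K x)) + 2 * (W x * ∫⁻ z, R z * W z ∂(K x))))
          = R x * (∫⁻ z, R z * ENNReal.ofReal ((h z - h x) ^ 2) ∂(K x))
            + (2 * (R x * (U x * ∫⁻ z, R z * U z ∂(K x)))
              + 2 * (R x * (W x * ∫⁻ z, R z * W z ∂(K x)))) := fun x => by ring
      rw [lintegral_congr e1, lintegral_add_left (mR.mul_pt mIF),
        lintegral_add_left (((mR.mul_pt (mU.mul_pt mIU))).const_mul _),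
        lintegral_const_mul _ (mR.mul_pt (mU.mul_pt mIU)), lintegral_const_mul _ (mR.mul_pt (mW.mul_pt mIW))]
    have eR : (∫⁻ x, R x * (H x * ∫⁻ z, R z ∂(K x)) ∂πcur)
        + ((∫⁻ x, R x * (∫⁻ z, R z * H z ∂(K x)) ∂πcur)
          + (2 * (∫⁻ x, R x * (U x * ∫⁻ z, R z * W z ∂(K x)) ∂πcur)
            + 2 * (∫⁻ x, R x * (W x * ∫⁻ z, R z * U z ∂(K x)) ∂πcur)))
        = ∫⁻ x, R x * (H x * (∫⁻ z, R z ∂(K x)) + ((∫⁻ z, R z * H z ∂(K x))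
            + (2 * (U x * ∫⁻ z, R z * W z ∂(K x)) + 2 * (W x * ∫⁻ z, R z * U z ∂(K x))))) ∂πcur := by
      have e1 : ∀ x : Θ, R x * (H x * (∫⁻ z, R z ∂(K x)) + ((∫⁻ z, R z * H z ∂(K x))
            + (2 * (U x * ∫⁻ z, R z * W z ∂(K x)) + 2 * (W x * ∫⁻ z, R z * U z ∂(K x)))))
          = R x * (H x * ∫⁻ z, R z ∂(K x)) + (R x * (∫⁻ z, R z * H z ∂(K x))
            + (2 * (R x * (U x * ∫⁻ z, R z * W z ∂(K x)))
              + 2 * (R x * (W x * ∫⁻ z, R z * U z ∂(K x))))) := fun x => by ring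
      rw [lintegral_congr e1, lintegral_add_left (mR.mul_pt (mH.mul_pt mIR)),
        lintegral_add_left (mR.mul_pt mIH),
        lintegral_add_left (((mR.mul_pt (mU.mul_pt mIW))).const_mul _),
        lintegral_const_mul _ (mR.mul_pt (mU.mul_pt mIW)), lintegral_const_mul _ (mR.mul_pt (mW.mul_pt mIU))]
    rw [eL, eR]
    exact lintegral_congr fun x => by rw [hIDx x]
  -- absolute value function
  set A : Θ → ℝ≥0∞ := fun z => ENNReal.ofReal |h z| with hAdef
  have mA : Measurable A := mh.abs.ennreal_ofReal
  have mIA : Measurable fun x => ∫⁻ z, R z * A z ∂(K x) := minnerK _ (mR.mul_pt mA)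
  have hAA : ∀ z, A z * A z = H z := by
    intro z
    rw [hAdef, hHdef]
    simp only
    rw [← ENNReal.ofReal_mul (abs_nonneg _), abs_mul_abs_self, sq]
  have hUleA : ∀ z, U z ≤ A z := fun z =>
    ENNReal.ofReal_le_ofReal (max_le (le_abs_self _) (abs_nonneg _))
  have hWleA : ∀ z, W z ≤ A z := fun z =>
    ENNReal.ofReal_le_ofReal (max_le (neg_le_abs _) (abs_nonneg _))
  -- G forms
  have hA2G := hC U U mU mU
  have hA3G := hC W W mW mW
  have hA6G := hC U W mU mW
  have hA7G := hC W U mW mU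
  have hAAG := hC A A mA mA
  -- bound for the diagonal AA term
  have hpt : ∀ x, 2 * (R x * (A x * ∫⁻ z, R z * A z ∂(K x)))
      ≤ R x * (H x * ∫⁻ z, R z ∂(K x)) + R x * (∫⁻ z, R z * H z ∂(K x)) := by
    intro x
    have e1 : 2 * (R x * (A x * ∫⁻ z, R z * A z ∂(K x)))
        = R x * ((2 * A x) * ∫⁻ z, R z * A z ∂(K x)) := by ring
    have e2 : (2 * A x) * ∫⁻ z, R z * A z ∂(K x) = ∫⁻ z, (2 * A x) * (R z * A z) ∂(K x) :=
      (lintegral_const_mul _ (mR.mul_pt mA)).symm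
    have e3 : ∀ z, (2 * A x) * (R z * A z) ≤ H x * R z + R z * H z := by
      intro z
      have e4 : (2 * A x) * (R z * A z) = (2 * (A x * A z)) * R z := by ring
      have h4 : 2 * (A x * A z) ≤ H x + H z := by
        rw [← hAA x, ← hAA z]
        exact ennreal_amgm _ _
      rw [e4]
      calc (2 * (A x * A z)) * R z ≤ (H x + H z) * R z := mul_le_mul_left h4 _
        _ = H x * R z + R z * H z := by ring
    calc 2 * (R x * (A x * ∫⁻ z, R z * A z ∂(K x)))
        = R x * ∫⁻ z, (2 * A x) * (R z * A z) ∂(K x) := by rw [e1, e2]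
      _ ≤ R x * ∫⁻ z, (H x * R z + R z * H z) ∂(K x) :=
          mul_le_mul_right (lintegral_mono e3) _
      _ = R x * (H x * (∫⁻ z, R z ∂(K x)) + ∫⁻ z, R z * H z ∂(K x)) := by
          rw [lintegral_add_left (mR.const_mul _), lintegral_const_mul _ mR]
      _ = R x * (H x * ∫⁻ z, R z ∂(K x)) + R x * (∫⁻ z, R z * H z ∂(K x)) := by ring
  have h2AA : 2 * (∫⁻ x, R x * (A x * ∫⁻ z, R z * A z ∂(K x)) ∂πcur)
      ≤ (∫⁻ x, R x * (H x * ∫⁻ z, R z ∂(K x)) ∂πcur)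
        + (∫⁻ x, R x * (∫⁻ z, R z * H z ∂(K x)) ∂πcur) := by
    rw [← lintegral_const_mul 2 (mR.mul_pt (mA.mul_pt mIA))]
    calc ∫⁻ x, 2 * (R x * (A x * ∫⁻ z, R z * A z ∂(K x))) ∂πcur
        ≤ ∫⁻ x, (R x * (H x * ∫⁻ z, R z ∂(K x)) + R x * (∫⁻ z, R z * H z ∂(K x))) ∂πcur :=
          lintegral_mono hpt
      _ = _ := lintegral_add_left (mR.mul_pt (mH.mul_pt mIR)) _
  -- bound A4 by ofReal ρ
  have hIRle : ∀ x, ∫⁻ z, R z ∂(K x) ≤ ENNReal.ofReal ρ := by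
    intro x
    calc ∫⁻ z, R z ∂(K x) ≤ ∫⁻ _, ENNReal.ofReal ρ ∂(K x) :=
        lintegral_mono fun z => ENNReal.ofReal_le_ofReal (hρ z)
      _ = ENNReal.ofReal ρ := by rw [lintegral_const, measure_univ, mul_one]
  have hRH1 : ∫⁻ x, R x * H x ∂πcur = 1 := by
    have h1 : ∫⁻ x, H x ∂πprev = ∫⁻ x, R x * H x ∂πcur := by
      rw [hdens, lintegral_withDensity_eq_lintegral_mul πcur mR mH]; rfl
    rw [← h1, hHdef]
    rw [← ofReal_integral_eq_lintegral_ofReal hint (ae_of_all _ fun x => sq_nonneg _), hnorm,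
      ENNReal.ofReal_one]
  have hA4le : (∫⁻ x, R x * (H x * ∫⁻ z, R z ∂(K x)) ∂πcur) ≤ ENNReal.ofReal ρ := by
    calc (∫⁻ x, R x * (H x * ∫⁻ z, R z ∂(K x)) ∂πcur)
        ≤ ∫⁻ x, ENNReal.ofReal ρ * (R x * H x) ∂πcur := by
          refine lintegral_mono fun x => ?_
          calc R x * (H x * ∫⁻ z, R z ∂(K x)) ≤ R x * (H x * ENNReal.ofReal ρ) :=
              mul_le_mul_right (mul_le_mul_right (hIRle x) _) _
            _ = ENNReal.ofReal ρ * (R x * H x) := by ring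
      _ = ENNReal.ofReal ρ * ∫⁻ x, R x * H x ∂πcur := lintegral_const_mul _ (mR.mul_pt mH)
      _ = ENNReal.ofReal ρ := by rw [hRH1, mul_one]
  -- A5 = A4
  have hA5eqA4 : (∫⁻ x, R x * (∫⁻ z, R z * H z ∂(K x)) ∂πcur)
      = (∫⁻ x, R x * (H x * ∫⁻ z, R z ∂(K x)) ∂πcur) := by
    have l5 : (∫⁻ x, R x * (∫⁻ z, R z * H z ∂(K x)) ∂πcur)
        = ∫⁻ x, R x * ((fun _ : Θ => (1:ℝ≥0∞)) x * ∫⁻ z, R z * H z ∂(K x)) ∂πcur :=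
      lintegral_congr fun x => by rw [one_mul]
    have l4 : (∫⁻ x, R x * (H x * ∫⁻ z, R z ∂(K x)) ∂πcur)
        = ∫⁻ x, R x * (H x * ∫⁻ z, R z * (fun _ : Θ => (1:ℝ≥0∞)) z ∂(K x)) ∂πcur :=
      lintegral_congr fun x => by
        congr 1
        · exact congrArg (H x * ·) (lintegral_congr fun z => (mul_one _).symm)
    rw [l5, hC _ _ measurable_const mH, l4, hC _ _ mH measurable_const]
    exact lintegral_congr fun x => mul_comm _ _
  -- comparisons of the G-form cross terms
  have hGU : ∀ x, (∫⁻ y, R y * U y ∂(M x)) ≤ ∫⁻ y, R y * A y ∂(M x) :=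
    fun x => lintegral_mono fun y => mul_le_mul_right (hUleA y) _
  have hGW : ∀ x, (∫⁻ y, R y * W y ∂(M x)) ≤ ∫⁻ y, R y * A y ∂(M x) :=
    fun x => lintegral_mono fun y => mul_le_mul_right (hWleA y) _
  have hA2leAA : (∫⁻ x, R x * (U x * ∫⁻ z, R z * U z ∂(K x)) ∂πcur)
      ≤ ∫⁻ x, R x * (A x * ∫⁻ z, R z * A z ∂(K x)) ∂πcur := by
    rw [hA2G, hAAG]
    exact lintegral_mono fun x => mul_le_mul' (hGU x) (hGU x)
  have hA3leAA : (∫⁻ x, R x * (W x * ∫⁻ z, R z * W z ∂(K x)) ∂πcur)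
      ≤ ∫⁻ x, R x * (A x * ∫⁻ z, R z * A z ∂(K x)) ∂πcur := by
    rw [hA3G, hAAG]
    exact lintegral_mono fun x => mul_le_mul' (hGW x) (hGW x)
  have hAAfin : (∫⁻ x, R x * (A x * ∫⁻ z, R z * A z ∂(K x)) ∂πcur) ≠ ⊤ := by
    intro htop
    have h2 : (2:ℝ≥0∞) * (∫⁻ x, R x * (A x * ∫⁻ z, R z * A z ∂(K x)) ∂πcur) = ⊤ := by
      rw [htop]; simp
    have h3 := h2AA
    rw [h2, hA5eqA4] at h3
    have h4 : (⊤:ℝ≥0∞) ≤ ENNReal.ofReal ρ + ENNReal.ofReal ρ :=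
      h3.trans (add_le_add hA4le hA4le)
    exact (lt_of_le_of_lt h4 (by finiteness)).ne rfl
  have hfin : (2 * (∫⁻ x, R x * (U x * ∫⁻ z, R z * U z ∂(K x)) ∂πcur)
      + 2 * (∫⁻ x, R x * (W x * ∫⁻ z, R z * W z ∂(K x)) ∂πcur)) ≠ ⊤ := by
    have : (2 * (∫⁻ x, R x * (U x * ∫⁻ z, R z * U z ∂(K x)) ∂πcur)
        + 2 * (∫⁻ x, R x * (W x * ∫⁻ z, R z * W z ∂(K x)) ∂πcur))
        ≤ 2 * (∫⁻ x, R x * (A x * ∫⁻ z, R z * A z ∂(K x)) ∂πcur)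
          + 2 * (∫⁻ x, R x * (A x * ∫⁻ z, R z * A z ∂(K x)) ∂πcur) :=
      add_le_add (mul_le_mul_right hA2leAA _) (mul_le_mul_right hA3leAA _)
    intro htop
    rw [htop] at this
    have hlt : (2 * (∫⁻ x, R x * (A x * ∫⁻ z, R z * A z ∂(K x)) ∂πcur)
        + 2 * (∫⁻ x, R x * (A x * ∫⁻ z, R z * A z ∂(K x)) ∂πcur)) ≠ ⊤ := by finiteness
    exact hlt (top_le_iff.mp this)
  -- cross terms dominated by diagonal terms
  have h67 : (2 * (∫⁻ x, R x * (U x * ∫⁻ z, R z * W z ∂(K x)) ∂πcur)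
        + 2 * (∫⁻ x, R x * (W x * ∫⁻ z, R z * U z ∂(K x)) ∂πcur))
      ≤ (2 * (∫⁻ x, R x * (U x * ∫⁻ z, R z * U z ∂(K x)) ∂πcur)
        + 2 * (∫⁻ x, R x * (W x * ∫⁻ z, R z * W z ∂(K x)) ∂πcur)) := by
    have h6 : (2:ℝ≥0∞) * (∫⁻ x, R x * (U x * ∫⁻ z, R z * W z ∂(K x)) ∂πcur)
        ≤ (∫⁻ x, R x * (U x * ∫⁻ z, R z * U z ∂(K x)) ∂πcur)
          + (∫⁻ x, R x * (W x * ∫⁻ z, R z * W z ∂(K x)) ∂πcur) := by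
      rw [hA6G, hA2G, hA3G, ← lintegral_const_mul 2
          ((minnerM _ (mR.mul_pt mU)).mul_pt (minnerM _ (mR.mul_pt mW))),
        ← lintegral_add_left ((minnerM _ (mR.mul_pt mU)).mul_pt (minnerM _ (mR.mul_pt mU)))]
      exact lintegral_mono fun x => ennreal_amgm _ _
    have h7 : (2:ℝ≥0∞) * (∫⁻ x, R x * (W x * ∫⁻ z, R z * U z ∂(K x)) ∂πcur)
        ≤ (∫⁻ x, R x * (U x * ∫⁻ z, R z * U z ∂(K x)) ∂πcur)
          + (∫⁻ x, R x * (W x * ∫⁻ z, R z * W z ∂(K x)) ∂πcur) := by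
      rw [hA7G, hA2G, hA3G, ← lintegral_const_mul 2
          ((minnerM _ (mR.mul_pt mW)).mul_pt (minnerM _ (mR.mul_pt mU))),
        ← lintegral_add_left ((minnerM _ (mR.mul_pt mU)).mul_pt (minnerM _ (mR.mul_pt mU)))]
      refine lintegral_mono fun x => ?_
      calc 2 * ((∫⁻ y, R y * W y ∂(M x)) * ∫⁻ y, R y * U y ∂(M x))
          = 2 * ((∫⁻ y, R y * U y ∂(M x)) * ∫⁻ y, R y * W y ∂(M x)) := by ring
        _ ≤ _ := ennreal_amgm _ _
    calc (2 * (∫⁻ x, R x * (U x * ∫⁻ z, R z * W z ∂(K x)) ∂πcur)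
          + 2 * (∫⁻ x, R x * (W x * ∫⁻ z, R z * U z ∂(K x)) ∂πcur))
        ≤ ((∫⁻ x, R x * (U x * ∫⁻ z, R z * U z ∂(K x)) ∂πcur)
            + (∫⁻ x, R x * (W x * ∫⁻ z, R z * W z ∂(K x)) ∂πcur))
          + ((∫⁻ x, R x * (U x * ∫⁻ z, R z * U z ∂(K x)) ∂πcur)
            + (∫⁻ x, R x * (W x * ∫⁻ z, R z * W z ∂(K x)) ∂πcur)) := add_le_add h6 h7
      _ = _ := by ring
  -- the main cancellation: A1 ≤ A4 + A5
  have hA1le : (∫⁻ x, R x * (∫⁻ z, R z * ENNReal.ofReal ((h z - h x) ^ 2) ∂(K x)) ∂πcur)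
      ≤ (∫⁻ x, R x * (H x * ∫⁻ z, R z ∂(K x)) ∂πcur)
        + (∫⁻ x, R x * (∫⁻ z, R z * H z ∂(K x)) ∂πcur) := by
    have step : (∫⁻ x, R x * (∫⁻ z, R z * ENNReal.ofReal ((h z - h x) ^ 2) ∂(K x)) ∂πcur)
        + (2 * (∫⁻ x, R x * (U x * ∫⁻ z, R z * U z ∂(K x)) ∂πcur)
          + 2 * (∫⁻ x, R x * (W x * ∫⁻ z, R z * W z ∂(K x)) ∂πcur))
        ≤ ((∫⁻ x, R x * (H x * ∫⁻ z, R z ∂(K x)) ∂πcur)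
          + (∫⁻ x, R x * (∫⁻ z, R z * H z ∂(K x)) ∂πcur))
        + (2 * (∫⁻ x, R x * (U x * ∫⁻ z, R z * U z ∂(K x)) ∂πcur)
          + 2 * (∫⁻ x, R x * (W x * ∫⁻ z, R z * W z ∂(K x)) ∂πcur)) := by
      rw [hEQ]
      calc (∫⁻ x, R x * (H x * ∫⁻ z, R z ∂(K x)) ∂πcur)
          + ((∫⁻ x, R x * (∫⁻ z, R z * H z ∂(K x)) ∂πcur)
            + (2 * (∫⁻ x, R x * (U x * ∫⁻ z, R z * W z ∂(K x)) ∂πcur)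
              + 2 * (∫⁻ x, R x * (W x * ∫⁻ z, R z * U z ∂(K x)) ∂πcur)))
          ≤ (∫⁻ x, R x * (H x * ∫⁻ z, R z ∂(K x)) ∂πcur)
          + ((∫⁻ x, R x * (∫⁻ z, R z * H z ∂(K x)) ∂πcur)
            + (2 * (∫⁻ x, R x * (U x * ∫⁻ z, R z * U z ∂(K x)) ∂πcur)
              + 2 * (∫⁻ x, R x * (W x * ∫⁻ z, R z * W z ∂(K x)) ∂πcur))) :=
            add_le_add_right (add_le_add_right h67 _) _
        _ = _ := by ring
    exact (ENNReal.add_le_add_iff_right hfin).mp step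
  -- the discrepancy weight
  set Φ : Θ → ℝ≥0∞ := fun x => ∫⁻ z, ENNReal.ofReal |r z - 1| ∂(K x) with hΦdef
  have mΦ : Measurable Φ :=
    minnerK _ ((hrmeas.sub measurable_const).abs.ennreal_ofReal)
  have hΦle : ∀ x, Φ x ≤ ENNReal.ofReal (ρ + 1) := by
    intro x
    rw [hΦdef]
    calc ∫⁻ z, ENNReal.ofReal |r z - 1| ∂(K x)
        ≤ ∫⁻ _, ENNReal.ofReal (ρ + 1) ∂(K x) := by
          refine lintegral_mono fun z => ENNReal.ofReal_le_ofReal (abs_le.2 ⟨?_, ?_⟩)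
          · have := hrnonneg z; linarith
          · have := hρ z; linarith
      _ = ENNReal.ofReal (ρ + 1) := by rw [lintegral_const, measure_univ, mul_one]
  have hΦne : ∀ x, Φ x ≠ ⊤ := fun x => ((hΦle x).trans_lt ENNReal.ofReal_lt_top).ne
  -- A4 ≤ 1 + 𝒜
  have hA4bound : (∫⁻ x, R x * (H x * ∫⁻ z, R z ∂(K x)) ∂πcur)
      ≤ 1 + ∫⁻ x, R x * (H x * Φ x) ∂πcur := by
    have hR1 : ∀ z, R z ≤ 1 + ENNReal.ofReal |r z - 1| := by
      intro z
      rw [hRdef]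
      calc ENNReal.ofReal (r z) ≤ ENNReal.ofReal (1 + |r z - 1|) :=
          ENNReal.ofReal_le_ofReal (by rcases abs_cases (r z - 1) with ⟨he, _⟩ | ⟨he, _⟩ <;> linarith)
        _ = 1 + ENNReal.ofReal |r z - 1| := by
          rw [ENNReal.ofReal_add (by norm_num) (abs_nonneg _), ENNReal.ofReal_one]
    have hIRle2 : ∀ x, (∫⁻ z, R z ∂(K x)) ≤ 1 + Φ x := by
      intro x
      calc ∫⁻ z, R z ∂(K x) ≤ ∫⁻ z, (1 + ENNReal.ofReal |r z - 1|) ∂(K x) :=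
          lintegral_mono hR1
        _ = (∫⁻ _, (1:ℝ≥0∞) ∂(K x)) + Φ x := lintegral_add_left measurable_const _
        _ = 1 + Φ x := by rw [lintegral_const, measure_univ, mul_one]
    calc (∫⁻ x, R x * (H x * ∫⁻ z, R z ∂(K x)) ∂πcur)
        ≤ ∫⁻ x, (R x * H x + R x * (H x * Φ x)) ∂πcur := by
          refine lintegral_mono fun x => ?_
          calc R x * (H x * ∫⁻ z, R z ∂(K x)) ≤ R x * (H x * (1 + Φ x)) :=
              mul_le_mul_right (mul_le_mul_right (hIRle2 x) _) _
            _ = R x * H x + R x * (H x * Φ x) := by ring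
      _ = (∫⁻ x, R x * H x ∂πcur) + ∫⁻ x, R x * (H x * Φ x) ∂πcur :=
          lintegral_add_left (mR.mul_pt mH) _
      _ = 1 + ∫⁻ x, R x * (H x * Φ x) ∂πcur := by rw [hRH1]
  -- 𝒜 = ofReal ah
  have hψ : ∀ x, (∫ z, |r z - 1| ∂((M x).bind (fun y => M y))) = (Φ x).toReal := by
    intro x
    have hKx : (M x).bind (fun y => M y) = K x := by
      rw [hKdef, Kernel.comp_apply]
    rw [hKx, integral_eq_lintegral_of_nonneg_ae (f := fun z => |r z - 1|) (ae_of_all _ fun z => abs_nonneg _)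
      ((hrmeas.sub measurable_const).abs.aestronglyMeasurable), hΦdef]
  have hψnonneg : ∀ x, 0 ≤ (Φ x).toReal := fun x => ENNReal.toReal_nonneg
  have hψle : ∀ x, (Φ x).toReal ≤ ρ + 1 := by
    intro x
    calc (Φ x).toReal ≤ (ENNReal.ofReal (ρ + 1)).toReal :=
        ENNReal.toReal_mono ENNReal.ofReal_ne_top (hΦle x)
      _ = ρ + 1 := ENNReal.toReal_ofReal (by linarith)
  have hintψ : Integrable (fun x => h x ^ 2 * (Φ x).toReal) πprev := by
    refine Integrable.mono' (hint.const_mul (ρ + 1))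
      (((mh.pow_const 2).mul_pt mΦ.ennreal_toReal).aestronglyMeasurable) (ae_of_all _ fun x => ?_)
    rw [Real.norm_eq_abs, abs_of_nonneg (mul_nonneg (sq_nonneg _) (hψnonneg x))]
    calc h x ^ 2 * (Φ x).toReal ≤ h x ^ 2 * (ρ + 1) :=
        mul_le_mul_of_nonneg_left (hψle x) (sq_nonneg _)
      _ = (ρ + 1) * h x ^ 2 := by ring
  have hA : ENNReal.ofReal ah = ∫⁻ x, R x * (H x * Φ x) ∂πcur := by
    have e0 : ah = ∫ x, h x ^ 2 * (Φ x).toReal ∂πprev := by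
      rw [hah]
      exact integral_congr_ae (ae_of_all _ fun x => by dsimp only; rw [hψ x])
    rw [e0, ofReal_integral_eq_lintegral_ofReal hintψ
      (ae_of_all _ fun x => mul_nonneg (sq_nonneg _) (hψnonneg x))]
    have e1 : ∀ x, ENNReal.ofReal (h x ^ 2 * (Φ x).toReal) = H x * Φ x := by
      intro x
      rw [ENNReal.ofReal_mul (sq_nonneg _), ENNReal.ofReal_toReal (hΦne x), hHdef]
    rw [lintegral_congr e1]
    rw [hdens, lintegral_withDensity_eq_lintegral_mul πcur mR (mH.mul_pt mΦ)]
    exact lintegral_congr fun x => by rw [Pi.mul_apply]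
  -- combine the ENNReal bounds
  have hah0 : 0 ≤ ah := by
    rw [hah]
    exact integral_nonneg fun x => mul_nonneg (sq_nonneg _)
      (integral_nonneg fun z => abs_nonneg _)
  have hA1bound : (∫⁻ x, R x * (∫⁻ z, R z * ENNReal.ofReal ((h z - h x) ^ 2) ∂(K x)) ∂πcur)
      ≤ (1 + ENNReal.ofReal ah) + (1 + ENNReal.ofReal ah) := by
    calc (∫⁻ x, R x * (∫⁻ z, R z * ENNReal.ofReal ((h z - h x) ^ 2) ∂(K x)) ∂πcur)
        ≤ (∫⁻ x, R x * (H x * ∫⁻ z, R z ∂(K x)) ∂πcur)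
          + (∫⁻ x, R x * (∫⁻ z, R z * H z ∂(K x)) ∂πcur) := hA1le
      _ = (∫⁻ x, R x * (H x * ∫⁻ z, R z ∂(K x)) ∂πcur)
          + (∫⁻ x, R x * (H x * ∫⁻ z, R z ∂(K x)) ∂πcur) := by rw [hA5eqA4]
      _ ≤ (1 + ∫⁻ x, R x * (H x * Φ x) ∂πcur) + (1 + ∫⁻ x, R x * (H x * Φ x) ∂πcur) :=
          add_le_add hA4bound hA4bound
      _ = (1 + ENNReal.ofReal ah) + (1 + ENNReal.ofReal ah) := by rw [← hA]
  have hA1fin : (∫⁻ x, R x * (∫⁻ z, R z * ENNReal.ofReal ((h z - h x) ^ 2) ∂(K x)) ∂πcur) ≠ ⊤ :=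
    (hA1bound.trans_lt (by finiteness)).ne
  -- convert the Bochner integral
  have hinner : ∀ x, (∫ y, (h y - h x) ^ 2 ∂(Qmeas M r x))
      = (∫⁻ z, R z * ENNReal.ofReal ((h z - h x) ^ 2) ∂(K x)).toReal := by
    intro x
    rw [integral_eq_lintegral_of_nonneg_ae (f := fun y => (h y - h x) ^ 2) (ae_of_all _ fun y => sq_nonneg _)
      (((mh.sub measurable_const).pow_const 2).aestronglyMeasurable),
      hQl x (fun z => ENNReal.ofReal ((h z - h x) ^ 2)) (((mh.sub measurable_const).pow_const 2).ennreal_ofReal)]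
  have hA1' : (∫⁻ x, (∫⁻ z, R z * ENNReal.ofReal ((h z - h x) ^ 2) ∂(K x)) ∂πprev)
      = ∫⁻ x, R x * (∫⁻ z, R z * ENNReal.ofReal ((h z - h x) ^ 2) ∂(K x)) ∂πcur := by
    rw [hdens, lintegral_withDensity_eq_lintegral_mul πcur mR mIF]
    exact lintegral_congr fun x => by rw [Pi.mul_apply]
  calc (∫ x, (∫ y, (h y - h x) ^ 2 ∂(Qmeas M r x)) ∂πprev)
      = ∫ x, (∫⁻ z, R z * ENNReal.ofReal ((h z - h x) ^ 2) ∂(K x)).toReal ∂πprev :=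
        integral_congr_ae (ae_of_all _ fun x => by dsimp only; rw [hinner x])
    _ = (∫⁻ x, ENNReal.ofReal ((∫⁻ z, R z * ENNReal.ofReal ((h z - h x) ^ 2) ∂(K x)).toReal) ∂πprev).toReal :=
        integral_eq_lintegral_of_nonneg_ae (ae_of_all _ fun x => ENNReal.toReal_nonneg)
          (mIF.ennreal_toReal.aestronglyMeasurable)
    _ ≤ (∫⁻ x, (∫⁻ z, R z * ENNReal.ofReal ((h z - h x) ^ 2) ∂(K x)) ∂πprev).toReal := by
        refine ENNReal.toReal_mono (by rw [hA1']; exact hA1fin)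
          (lintegral_mono fun x => ENNReal.ofReal_toReal_le)
    _ = (∫⁻ x, R x * (∫⁻ z, R z * ENNReal.ofReal ((h z - h x) ^ 2) ∂(K x)) ∂πcur).toReal := by
        rw [hA1']
    _ ≤ ((1 + ENNReal.ofReal ah) + (1 + ENNReal.ofReal ah)).toReal :=
        ENNReal.toReal_mono (by finiteness) hA1bound
    _ = 2 + 2 * ah := by
        rw [ENNReal.toReal_add (by finiteness) (by finiteness),
          ENNReal.toReal_add (by finiteness) (by finiteness),
          ENNReal.toReal_one, ENNReal.toReal_ofReal hah0]
        ring


theorem specGap_le_one_add_discrepancy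
    {Θ : Type*} [MeasurableSpace Θ]
    (πprev πcur : Measure Θ)
    (hπprev : IsProbabilityMeasure πprev) (hπcur : IsProbabilityMeasure πcur)
    (M : Kernel Θ Θ) (hM : IsMarkovKernel M)
    (hrev : IsReversible M πcur)
    (r : Θ → ℝ) (hrmeas : Measurable r) (hrnonneg : ∀ z, 0 ≤ r z)
    (hdens : πprev = πcur.withDensity (fun z => ENNReal.ofReal (r z)))
    (ρ : ℝ) (hρ : ∀ z, r z ≤ ρ) :
    specGap πprev M r ≤ 1 + discrepancy πprev M r := by
  -- Θ is nonempty
  have hΘ : Nonempty Θ := by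
    by_contra hne
    rw [not_nonempty_iff] at hne
    have h1 := hπprev.measure_univ
    rw [Set.univ_eq_empty_iff.2 hne, measure_empty] at h1
    exact zero_ne_one h1
  obtain ⟨z₀⟩ := hΘ
  have hρ0 : 0 ≤ ρ := (hrnonneg z₀).trans (hρ z₀)
  -- properties of the weight ψ
  have hKprob : ∀ x : Θ, IsProbabilityMeasure ((M x).bind (fun y => M y)) := by
    intro x
    have e : (M x).bind (fun y => M y) = (M ∘ₖ M) x := (Kernel.comp_apply M M x).symm
    rw [e]
    infer_instance
  have hψ0 : ∀ x : Θ, 0 ≤ ∫ z, |r z - 1| ∂((M x).bind (fun y => M y)) :=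
    fun x => integral_nonneg fun z => abs_nonneg _
  have hψle : ∀ x : Θ, (∫ z, |r z - 1| ∂((M x).bind (fun y => M y))) ≤ ρ + 1 := by
    intro x
    haveI := hKprob x
    have hintr : Integrable (fun z => |r z - 1|) ((M x).bind fun y => M y) := by
      refine Integrable.mono' (integrable_const (ρ + 1))
        ((hrmeas.sub measurable_const).abs.aestronglyMeasurable) (ae_of_all _ fun z => ?_)
      rw [Real.norm_eq_abs, abs_abs]
      exact abs_le.2 ⟨by have := hrnonneg z; linarith, by have := hρ z; linarith⟩
    calc (∫ z, |r z - 1| ∂((M x).bind (fun y => M y)))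
        ≤ ∫ _, (ρ + 1) ∂((M x).bind (fun y => M y)) :=
          integral_mono hintr (integrable_const _) (fun z =>
            abs_le.2 ⟨by have := hrnonneg z; linarith, by have := hρ z; linarith⟩)
      _ = ρ + 1 := by simp [measure_univ]
  -- the discrepancy set is bounded above, and the discrepancy is nonnegative
  unfold specGap discrepancy
  have hbddA : BddAbove {a : ℝ | ∃ f : Θ → ℝ, Measurable f ∧
      Integrable (fun x => (f x) ^ 2) πprev ∧ (∫ x, (f x) ^ 2 ∂πprev) = 1 ∧
      a = ∫ x, (f x) ^ 2 * (∫ z, |r z - 1| ∂((M x).bind (fun y => M y))) ∂πprev} := by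
    refine ⟨ρ + 1, ?_⟩
    rintro a ⟨f, hfm, hf2, hf1, rfl⟩
    calc (∫ x, (f x) ^ 2 * (∫ z, |r z - 1| ∂((M x).bind (fun y => M y))) ∂πprev)
        ≤ ∫ x, (ρ + 1) * (f x) ^ 2 ∂πprev := by
          refine integral_mono_of_nonneg (ae_of_all _ fun x => mul_nonneg (sq_nonneg _) (hψ0 x))
            (hf2.const_mul (ρ + 1)) (ae_of_all _ fun x => ?_)
          calc (f x) ^ 2 * (∫ z, |r z - 1| ∂((M x).bind (fun y => M y)))
              ≤ (f x) ^ 2 * (ρ + 1) := mul_le_mul_of_nonneg_left (hψle x) (sq_nonneg _)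
            _ = (ρ + 1) * (f x) ^ 2 := by ring
      _ = ρ + 1 := by rw [integral_const_mul, hf1, mul_one]
  have hmem1 : (∫ x, ((fun _ : Θ => (1:ℝ)) x) ^ 2
        * (∫ z, |r z - 1| ∂((M x).bind (fun y => M y))) ∂πprev)
      ∈ {a : ℝ | ∃ f : Θ → ℝ, Measurable f ∧
      Integrable (fun x => (f x) ^ 2) πprev ∧ (∫ x, (f x) ^ 2 ∂πprev) = 1 ∧
      a = ∫ x, (f x) ^ 2 * (∫ z, |r z - 1| ∂((M x).bind (fun y => M y))) ∂πprev} := by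
    refine ⟨fun _ => 1, measurable_const, ?_, ?_, rfl⟩
    · simpa using integrable_const (1:ℝ) (μ := πprev)
    · simp [measure_univ]
  have hα0 : 0 ≤ sSup {a : ℝ | ∃ f : Θ → ℝ, Measurable f ∧
      Integrable (fun x => (f x) ^ 2) πprev ∧ (∫ x, (f x) ^ 2 ∂πprev) = 1 ∧
      a = ∫ x, (f x) ^ 2 * (∫ z, |r z - 1| ∂((M x).bind (fun y => M y))) ∂πprev} :=
    le_trans (integral_nonneg fun x => mul_nonneg (sq_nonneg _) (hψ0 x)) (le_csSup hbddA hmem1)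
  -- case analysis on the spectral-gap set
  rcases Set.eq_empty_or_nonempty {g : ℝ | ∃ f : Θ → ℝ, Measurable f ∧
      Integrable (fun x => (f x) ^ 2) πprev ∧ 0 < varI πprev f ∧
      g = (∫ x, (∫ y, (f y - f x) ^ 2 ∂(Qmeas M r x)) ∂πprev) /
        (∫ x, (∫ y, (f y - f x) ^ 2 ∂πprev) ∂πprev)} with hS | hS
  · rw [hS, Real.sInf_empty]
    linarith
  · obtain ⟨g, hg⟩ := hS
    have hlb : BddBelow {g : ℝ | ∃ f : Θ → ℝ, Measurable f ∧
        Integrable (fun x => (f x) ^ 2) πprev ∧ 0 < varI πprev f ∧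
        g = (∫ x, (∫ y, (f y - f x) ^ 2 ∂(Qmeas M r x)) ∂πprev) /
          (∫ x, (∫ y, (f y - f x) ^ 2 ∂πprev) ∂πprev)} := by
      refine ⟨0, ?_⟩
      rintro b ⟨f, hfm, hf2, hv, rfl⟩
      exact div_nonneg (integral_nonneg fun x => integral_nonneg fun y => sq_nonneg _)
        (integral_nonneg fun x => integral_nonneg fun y => sq_nonneg _)
    refine le_trans (csInf_le hlb hg) ?_
    obtain ⟨f, hfm, hf2, hvar, rfl⟩ := hg
    -- notation
    set c : ℝ := ∫ x, f x ∂πprev with hc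
    set s : ℝ := ∫ x, (f x) ^ 2 ∂πprev with hs
    have hv : 0 < s - c ^ 2 := by
      simp only [varI] at hvar
      rw [hs, hc]
      exact hvar
    have hvne : s - c ^ 2 ≠ 0 := ne_of_gt hv
    -- f is integrable
    have hfint : Integrable f πprev := by
      have hb : Integrable (fun x => (f x ^ 2 + 1) / 2) πprev :=
        (hf2.add (integrable_const 1)).div_const 2
      refine Integrable.mono' hb hfm.aestronglyMeasurable (ae_of_all _ fun x => ?_)
      rw [Real.norm_eq_abs]
      nlinarith [sq_nonneg (|f x| - 1), sq_abs (f x)]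
    -- denominator equals 2 * variance
    have hDinner : ∀ x : Θ, (∫ y, (f y - f x) ^ 2 ∂πprev) = s - 2 * c * f x + f x ^ 2 := by
      intro x
      have e1 : (fun y => (f y - f x) ^ 2) = fun y => (f y ^ 2 - 2 * f x * f y) + f x ^ 2 :=
        funext fun y => by ring
      have hi1 : Integrable (fun y => f y ^ 2 - 2 * f x * f y) πprev :=
        hf2.sub (hfint.const_mul (2 * f x))
      have hi2 : Integrable (fun y => 2 * f x * f y) πprev := hfint.const_mul (2 * f x)
      rw [e1, integral_add hi1 (integrable_const _),
        integral_sub hf2 hi2, integral_const_mul, integral_const]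
      simp [measure_univ, ← hs, ← hc]
      ring
    have hD : (∫ x, (∫ y, (f y - f x) ^ 2 ∂πprev) ∂πprev) = 2 * (s - c ^ 2) := by
      rw [integral_congr_ae (ae_of_all _ fun x => hDinner x)]
      have hi3 : Integrable (fun x => s - 2 * c * f x) πprev :=
        (integrable_const s).sub (hfint.const_mul (2 * c))
      have hi4 : Integrable (fun x => 2 * c * f x) πprev := hfint.const_mul (2 * c)
      rw [integral_add hi3 hf2, integral_sub (integrable_const s) hi4, integral_const_mul,
        integral_const]
      simp [measure_univ, ← hs, ← hc]
      ring
    -- the normalized centered function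
    set h : Θ → ℝ := fun x => (f x - c) / Real.sqrt (s - c ^ 2) with hhdef
    have mh : Measurable h := (hfm.sub measurable_const).div_const _
    have hsq : ∀ x, h x ^ 2 = (f x ^ 2 - 2 * c * f x + c ^ 2) * (s - c ^ 2)⁻¹ := by
      intro x
      rw [hhdef]
      dsimp only
      rw [div_pow, Real.sq_sqrt hv.le, div_eq_mul_inv]
      ring_nf
    have hint_h : Integrable (fun x => h x ^ 2) πprev := by
      have hi5 : Integrable (fun x => (f x ^ 2 - 2 * c * f x + c ^ 2) * (s - c ^ 2)⁻¹) πprev :=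
        (((hf2.sub (hfint.const_mul (2 * c))).add (integrable_const (c ^ 2)))).mul_const _
      exact hi5.congr (ae_of_all _ fun x => (hsq x).symm)
    have hnorm_h : (∫ x, h x ^ 2 ∂πprev) = 1 := by
      rw [integral_congr_ae (ae_of_all _ fun x => hsq x), integral_mul_const]
      have hi6 : Integrable (fun x => f x ^ 2 - 2 * c * f x) πprev :=
        hf2.sub (hfint.const_mul (2 * c))
      have hi7 : Integrable (fun x => 2 * c * f x) πprev := hfint.const_mul (2 * c)
      have e2 : (fun x => f x ^ 2 - 2 * c * f x + c ^ 2)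
          = fun x => (f x ^ 2 - 2 * c * f x) + c ^ 2 := rfl
      rw [e2, integral_add hi6 (integrable_const _), integral_sub hf2 hi7, integral_const_mul,
        integral_const]
      simp [measure_univ, ← hs, ← hc]
      field_simp
      ring
    -- pointwise relation between f-differences and h-differences
    have hpt : ∀ x y : Θ, (f y - f x) ^ 2 = (s - c ^ 2) * (h y - h x) ^ 2 := by
      intro x y
      rw [hhdef]
      dsimp only
      rw [div_sub_div_same, div_pow, Real.sq_sqrt hv.le]
      rw [mul_div_cancel₀ _ hvne]
      congr 1
      ring
    -- numerator in terms of h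
    have hNf : (∫ x, (∫ y, (f y - f x) ^ 2 ∂(Qmeas M r x)) ∂πprev)
        = (s - c ^ 2) * ∫ x, (∫ y, (h y - h x) ^ 2 ∂(Qmeas M r x)) ∂πprev := by
      calc (∫ x, (∫ y, (f y - f x) ^ 2 ∂(Qmeas M r x)) ∂πprev)
          = ∫ x, (s - c ^ 2) * (∫ y, (h y - h x) ^ 2 ∂(Qmeas M r x)) ∂πprev := by
            refine integral_congr_ae (ae_of_all _ fun x => ?_)
            dsimp only
            calc (∫ y, (f y - f x) ^ 2 ∂(Qmeas M r x))
                = ∫ y, (s - c ^ 2) * (h y - h x) ^ 2 ∂(Qmeas M r x) :=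
                  integral_congr_ae (ae_of_all _ fun y => hpt x y)
              _ = (s - c ^ 2) * ∫ y, (h y - h x) ^ 2 ∂(Qmeas M r x) := integral_const_mul _ _
        _ = (s - c ^ 2) * ∫ x, (∫ y, (h y - h x) ^ 2 ∂(Qmeas M r x)) ∂πprev :=
            integral_const_mul _ _
    -- membership of a_h in the discrepancy set
    set ah : ℝ := ∫ x, h x ^ 2 * (∫ z, |r z - 1| ∂((M x).bind (fun y => M y))) ∂πprev with hahdef
    have hmemh : ah ∈ {a : ℝ | ∃ f : Θ → ℝ, Measurable f ∧
        Integrable (fun x => (f x) ^ 2) πprev ∧ (∫ x, (f x) ^ 2 ∂πprev) = 1 ∧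
        a = ∫ x, (f x) ^ 2 * (∫ z, |r z - 1| ∂((M x).bind (fun y => M y))) ∂πprev} :=
      ⟨h, mh, hint_h, hnorm_h, hahdef⟩
    have hahle := le_csSup hbddA hmemh
    -- the core bound
    have hcore := core_bound πprev πcur hπprev hπcur M hM hrev r hrmeas hrnonneg hdens ρ hρ hρ0
      h mh hint_h hnorm_h ah hahdef
    have hah0 : 0 ≤ ah := by
      rw [hahdef]
      exact integral_nonneg fun x => mul_nonneg (sq_nonneg _) (hψ0 x)
    -- conclude
    rw [hNf, hD, show 2 * (s - c ^ 2) = (s - c ^ 2) * 2 from by ring,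
      mul_div_mul_left _ _ hvne]
    have hdiv : (∫ x, (∫ y, (h y - h x) ^ 2 ∂(Qmeas M r x)) ∂πprev) / 2 ≤ 1 + ah := by
      rw [div_le_iff₀ (by norm_num : (0:ℝ) < 2)]
      linarith
    linarith
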